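/- Let (R, P) be twice differentiable functions solving the flat-space system r·(r R')' = R P² and r·(P'/r)' = R² P on (0,∞). Suppose the limits lim_{r→0⁺} P(r)P'(r)/r = k·p (which holds with k = P(0), p = P''(0) when P extends C²-regularly to 0 with P'(0) = 0) and lim_{r→∞} P(r)P'(r)/r = 0 both exist as stated. Then the improper integral ∫₀^∞ ( P'(r)²/r + R(r)²P(r)²/r ) dr converges and equals −k·p; i.e., with the dimensionless axis magnetic field 𝔹 = −p, the bifurcation condition ∫₀^∞ ( P'²/r + R²P²/r ) dr = k𝔹 holds. -/

import Mathlib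

open Set Filter MeasureTheory

/-- The flat-space bifurcation condition: for a solution
`(R, P)` of `r (r R')' = R P²`, `r (P'/r)' = R² P` on `(0,∞)` such that
`P P'/r → k p` as `r → 0⁺` and `P P'/r → 0` as `r → ∞`, the improper
integral `∫₀^∞ (P'²/r + R²P²/r) dr` converges and equals `−k p`, i.e.,
with `𝔹 = −p`, `∫₀^∞ (P'²/r + R²P²/r) dr = k 𝔹`. -/
theorem stmt_12 (R P : ℝ → ℝ) (k p : ℝ)
    (hR : ∀ r > (0 : ℝ), DifferentiableAt ℝ R r)
    (hP : ∀ r > (0 : ℝ), DifferentiableAt ℝ P r)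
    (hRd : ∀ r > (0 : ℝ), DifferentiableAt ℝ (fun s => s * deriv R s) r)
    (hPd : ∀ r > (0 : ℝ), DifferentiableAt ℝ (fun s => deriv P s / s) r)
    (hodeR : ∀ r > (0 : ℝ), r * deriv (fun s => s * deriv R s) r = R r * (P r) ^ 2)
    (hodeP : ∀ r > (0 : ℝ), r * deriv (fun s => deriv P s / s) r = (R r) ^ 2 * P r)
    (hlim0 : Tendsto (fun r => P r * deriv P r / r) (nhdsWithin 0 (Ioi 0))
      (nhds (k * p)))
    (hliminf : Tendsto (fun r => P r * deriv P r / r) atTop (nhds 0)) :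
    IntegrableOn (fun r => (deriv P r) ^ 2 / r + (R r) ^ 2 * (P r) ^ 2 / r)
      (Ioi 0) ∧
    ∫ r in Ioi (0 : ℝ), ((deriv P r) ^ 2 / r + (R r) ^ 2 * (P r) ^ 2 / r) =
      -(k * p) := by
  set F' : ℝ → ℝ := fun r => (deriv P r) ^ 2 / r + (R r) ^ 2 * (P r) ^ 2 / r with hF'
  set G : ℝ → ℝ := fun r => if r ≤ 0 then k * p else P r * deriv P r / r with hG
  have hGpos : ∀ r : ℝ, 0 < r → G r = P r * deriv P r / r := by
    intro r hr; simp [hG, not_le.2 hr]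
  have hGeq : ∀ᶠ r in nhdsWithin 0 (Ioi 0), G r = P r * deriv P r / r := by
    filter_upwards [self_mem_nhdsWithin] with r hr using hGpos r hr
  have hGtop : ∀ᶠ r in atTop, G r = P r * deriv P r / r := by
    filter_upwards [Ioi_mem_atTop (0:ℝ)] with r hr using hGpos r hr
  -- derivative of G on (0, ∞)
  have hderiv : ∀ x ∈ Ioi (0:ℝ), HasDerivAt G (F' x) x := by
    intro x hx
    have hx0 : (0:ℝ) < x := hx
    have hd : HasDerivAt (fun s => P s * (deriv P s / s))
        (deriv P x * (deriv P x / x) + P x * (R x ^ 2 * P x / x)) x := by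
      have h1 : HasDerivAt P (deriv P x) x := (hP x hx0).hasDerivAt
      have h2 : HasDerivAt (fun s => deriv P s / s)
          (deriv (fun s => deriv P s / s) x) x := (hPd x hx0).hasDerivAt
      have h3 : deriv (fun s => deriv P s / s) x = R x ^ 2 * P x / x := by
        have := hodeP x hx0
        field_simp at this ⊢
        linarith
      rw [h3] at h2
      exact h1.mul h2
    have heq : (fun s => P s * (deriv P s / s)) =ᶠ[nhds x] G := by
      filter_upwards [Ioi_mem_nhds hx0] with s hs
      rw [hGpos s hs, mul_div_assoc]
    have hval : deriv P x * (deriv P x / x) + P x * (R x ^ 2 * P x / x) = F' x := by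
      simp only [hF']
      ring
    rw [hval] at hd
    exact hd.congr_of_eventuallyEq heq.symm
  -- nonnegativity
  have hnonneg : ∀ x ∈ Ioi (0:ℝ), 0 ≤ F' x := by
    intro x hx
    have hx0 : (0:ℝ) < x := hx
    positivity
  -- continuity of G at 0 from the right
  have hcont : ContinuousWithinAt G (Ici (0:ℝ)) 0 := by
    have h0 : G 0 = k * p := by simp [hG]
    rw [ContinuousWithinAt, h0]
    have : Ici (0:ℝ) = insert 0 (Ioi 0) := by
      ext y; simp [le_iff_lt_or_eq, or_comm, eq_comm]
    rw [this, nhdsWithin_insert]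
    refine Tendsto.sup ?_ ?_
    · simpa [h0] using tendsto_pure_nhds G 0
    · exact (hlim0.congr' (by filter_upwards [hGeq] with r h using h.symm))
  -- limit of G at infinity
  have htop : Tendsto G atTop (nhds 0) :=
    hliminf.congr' (by filter_upwards [hGtop] with r h using h.symm)
  have hint : IntegrableOn F' (Ioi 0) :=
    integrableOn_Ioi_deriv_of_nonneg hcont hderiv hnonneg htop
  refine ⟨hint, ?_⟩
  have := integral_Ioi_of_hasDerivAt_of_tendsto hcont hderiv hint htop
  simpa [hG] using this
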